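/- Let E be a complex inner product space, S ⊆ E a complete linear subspace, and B ∈ E with orthogonal decomposition B = B∥ + B⊥ (B∥ ∈ S the orthogonal projection of B onto S, B⊥ = B − B∥), and assume B∥ ≠ 0. Let c ≥ 0. Then for every A ∈ S, setting μ = ‖A‖/‖B∥‖, one has ‖μ·B∥ − B‖ + c·μ·‖B∥‖ ≤ ‖A − B‖ + c·‖A‖. In particular, the infimum of A ↦ ‖A − B‖ + c·‖A‖ over S equals its infimum over the ray {μ·B∥ : μ ≥ 0}. -/

import Mathlib

/-- Reduction of the minimization of `A ↦ ‖A - B‖ + c·‖A‖` over the subspace `S` to the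
ray `{μ·Bpar : μ ≥ 0}` spanned by the orthogonal projection `Bpar` of `B` onto `S`. -/
theorem flat_norm_reduction_to_ray
    {E : Type*} [NormedAddCommGroup E] [InnerProductSpace ℂ E]
    (S : Submodule ℂ E) [CompleteSpace S] (B : E) (c : ℝ)
    (hc0 : 0 ≤ c)
    (Bpar Bperp : E)
    (hpar : Bpar = (Submodule.orthogonalProjectionOnto S B : E))
    (hperp : Bperp = B - Bpar)
    (hBpar : Bpar ≠ 0) :
    (∀ A ∈ S, ‖(‖A‖ / ‖Bpar‖) • Bpar - B‖ + c * (‖A‖ / ‖Bpar‖) * ‖Bpar‖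
        ≤ ‖A - B‖ + c * ‖A‖) ∧
    (⨅ A : S, (‖(A : E) - B‖ + c * ‖(A : E)‖))
      = ⨅ μ : {t : ℝ // 0 ≤ t}, (‖(μ : ℝ) • Bpar - B‖ + c * ‖(μ : ℝ) • Bpar‖) := by
  have hBparS : Bpar ∈ S := hpar ▸ (Submodule.orthogonalProjectionOnto S B).2
  have hBperp : Bperp ∈ Sᗮ := by
    rw [hperp, hpar]; exact S.sub_starProjection_mem_orthogonal B
  have hBn : (0:ℝ) < ‖Bpar‖ := norm_pos_iff.mpr hBpar
  -- key: for x ∈ S, ‖x - B‖^2 = ‖x - Bpar‖^2 + ‖Bperp‖^2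
  have key : ∀ x ∈ S, ‖x - B‖^2 = ‖x - Bpar‖^2 + ‖Bperp‖^2 := by
    intro x hx
    have hxB : x - B = (x - Bpar) - Bperp := by rw [hperp]; abel
    have hin : inner ℂ (x - Bpar) (-Bperp) = (0:ℂ) := by
      have := S.inner_right_of_mem_orthogonal (S.sub_mem hx hBparS) hBperp
      rw [inner_neg_right, this, neg_zero]
    have h := norm_add_sq_eq_norm_sq_add_norm_sq_of_inner_eq_zero (x - Bpar) (-Bperp) hin
    rw [hxB, sub_eq_add_neg]
    simpa [pow_two] using h
  have main : ∀ A ∈ S, ‖(‖A‖ / ‖Bpar‖) • Bpar - B‖ + c * (‖A‖ / ‖Bpar‖) * ‖Bpar‖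
        ≤ ‖A - B‖ + c * ‖A‖ := by
    intro A hA
    set μ : ℝ := ‖A‖ / ‖Bpar‖ with hμ
    have hμBn : μ * ‖Bpar‖ = ‖A‖ := div_mul_cancel₀ _ hBn.ne'
    have hμS : (μ:ℂ) • Bpar ∈ S := S.smul_mem _ hBparS
    have h1 : ‖(μ:ℝ) • Bpar - Bpar‖ = |‖A‖ - ‖Bpar‖| := by
      rw [show (μ:ℝ) • Bpar - Bpar = (μ - 1) • Bpar by rw [sub_smul, one_smul],
        norm_smul, Real.norm_eq_abs, ← abs_of_pos hBn, ← abs_mul, sub_mul, one_mul, hμBn,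
        abs_of_pos hBn]
    have h2 : ‖(μ:ℝ) • Bpar - Bpar‖ ≤ ‖A - Bpar‖ := by
      rw [h1]; exact abs_norm_sub_norm_le _ _
    have hμSmem : (μ:ℝ) • Bpar ∈ S := by
      have : (μ:ℝ) • Bpar = ((μ:ℝ):ℂ) • Bpar := by simp
      rw [this]; exact S.smul_mem _ hBparS
    have h3 : ‖(μ:ℝ) • Bpar - B‖ ≤ ‖A - B‖ := by
      have k1 := key _ hμSmem
      have k2 := key _ hA
      have hsq : ‖(μ:ℝ) • Bpar - B‖^2 ≤ ‖A - B‖^2 := by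
        rw [k1, k2]
        have := pow_le_pow_left₀ (norm_nonneg _) h2 2
        linarith
      nlinarith [norm_nonneg ((μ:ℝ) • Bpar - B), norm_nonneg (A - B)]
    rw [mul_assoc, hμBn]
    linarith
  refine ⟨main, le_antisymm ?_ ?_⟩
  · -- inf over S ≤ inf over ray
    refine le_ciInf fun μ => ?_
    have hmem : (μ:ℝ) • Bpar ∈ S := by
      have : (μ:ℝ) • Bpar = ((μ:ℝ):ℂ) • Bpar := by simp
      rw [this]; exact S.smul_mem _ hBparS
    exact ciInf_le_of_le ⟨0, by rintro x ⟨A, rfl⟩; positivity⟩ ⟨_, hmem⟩ le_rfl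
  · -- inf over ray ≤ inf over S
    refine le_ciInf fun A => ?_
    have := main A A.2
    refine le_trans (ciInf_le_of_le ⟨0, by rintro x ⟨μ, rfl⟩; positivity⟩
      ⟨‖(A:E)‖ / ‖Bpar‖, by positivity⟩ le_rfl) ?_
    simpa [norm_smul, abs_of_nonneg (div_nonneg (norm_nonneg _) (norm_nonneg _)), mul_assoc] using this
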